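/- The function R(w) := Σ_{k=0}^∞ ((k+1)(k+2)/(k+3))·w^k − (1 − w)^{−2} + (1 − w)^{−1} − 2·Log(1/(1 − w)) is bounded on the open unit disc {w ∈ ℂ : |w| < 1}. Consequently, with ρ := 1 − w, the weighted Bergman kernel Σ_{k=0}^∞ ((k+1)(k+2)/(k+3))·w^k of the disc with weight 2 − |z|² equals ρ^{−2} − ρ^{−1} − 2·Log ρ plus a function bounded on the disc; in particular it genuinely contains a logarithmic term. -/

import Mathlib

open Complex

private lemma aux_bound {w : ℂ} (hw : ‖w‖ < 1) (k : ℕ) :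
    ‖(((k : ℂ) + 1) * ((k : ℂ) + 2) / ((k : ℂ) + 3)) * w ^ k
      - (((k : ℂ) + 1) * w ^ k) + w ^ k - 2 * (w ^ k / k)‖ ≤ 6 / ((k : ℝ) + 1) ^ 2 := by
  have hwk : ‖w ^ k‖ ≤ 1 := by
    rw [norm_pow]; exact pow_le_one₀ (norm_nonneg w) hw.le
  rcases Nat.eq_zero_or_pos k with rfl | hk
  · have heq0 : (((0:ℕ) : ℂ) + 1) * (((0:ℕ) : ℂ) + 2) / (((0:ℕ) : ℂ) + 3) * w ^ (0:ℕ)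
        - ((((0:ℕ) : ℂ) + 1) * w ^ (0:ℕ)) + w ^ (0:ℕ) - 2 * (w ^ (0:ℕ) / ((0:ℕ):ℂ))
        = (2:ℂ)/3 := by norm_num
    rw [heq0]
    have : ‖(2:ℂ)/3‖ = 2/3 := by
      rw [norm_div]; norm_num
    rw [this]; norm_num
  · have hk0 : (k : ℂ) ≠ 0 := Nat.cast_ne_zero.mpr hk.ne'
    have hk3 : (k : ℂ) + 3 ≠ 0 := by
      have h3 : ((k + 3 : ℕ) : ℂ) ≠ 0 := Nat.cast_ne_zero.mpr (by omega)
      intro h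
      exact h3 (by push_cast; linear_combination h)
    have heq : (((k : ℂ) + 1) * ((k : ℂ) + 2) / ((k : ℂ) + 3)) * w ^ k
        - (((k : ℂ) + 1) * w ^ k) + w ^ k - 2 * (w ^ k / k)
        = (-6 / ((k : ℂ) * ((k : ℂ) + 3))) * w ^ k := by
      field_simp
      ring
    rw [heq, norm_mul]
    have h1 : ‖(-6 : ℂ) / ((k : ℂ) * ((k : ℂ) + 3))‖ = 6 / ((k : ℝ) * ((k : ℝ) + 3)) := by
      rw [norm_div, norm_mul]
      rw [norm_neg]
      rw [Complex.norm_natCast]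
      congr 1
      · norm_num
      · congr 1
        have : ((k : ℂ) + 3) = ((k + 3 : ℕ) : ℂ) := by push_cast; ring
        rw [this, Complex.norm_natCast]; push_cast; ring
    rw [h1]
    have hkd : ((k:ℝ) + 1) ^ 2 ≤ (k:ℝ) * ((k:ℝ) + 3) := by
      have : (1:ℝ) ≤ (k:ℝ) := by exact_mod_cast hk
      nlinarith
    calc 6 / ((k : ℝ) * ((k : ℝ) + 3)) * ‖w ^ k‖ ≤ 6 / ((k : ℝ) * ((k : ℝ) + 3)) * 1 := by
          apply mul_le_mul_of_nonneg_left hwk; positivity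
    _ = 6 / ((k : ℝ) * ((k : ℝ) + 3)) := mul_one _
    _ ≤ 6 / ((k : ℝ) + 1) ^ 2 := by
          apply div_le_div_of_nonneg_left (by norm_num) (by positivity) hkd

theorem stmt10 : ∃ C : ℝ, ∀ w : ℂ, ‖w‖ < 1 →
    ‖(∑' k : ℕ, (((k : ℂ) + 1) * ((k : ℂ) + 2) / ((k : ℂ) + 3)) * w ^ k)
        - ((1 - w) ^ 2)⁻¹ + (1 - w)⁻¹ - 2 * Complex.log (1 / (1 - w))‖ ≤ C := by
  have hg : Summable (fun k : ℕ => 6 / ((k : ℝ) + 1) ^ 2) := by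
    have := (summable_nat_add_iff (f := fun n : ℕ => 6 / (n : ℝ) ^ 2) 1).mpr
      ((Real.summable_one_div_nat_pow.mpr one_lt_two).mul_left 6 |>.congr
        (by intro n; simp [div_eq_mul_inv, one_div]))
    exact this.congr (by intro n; push_cast; ring_nf)
  refine ⟨∑' k : ℕ, 6 / ((k : ℝ) + 1) ^ 2, fun w hw => ?_⟩
  have h1w : (1 : ℂ) - w ≠ 0 := sub_ne_zero_of_ne (by
    intro h; rw [← h] at hw; simp at hw)
  set t : ℕ → ℂ := fun k => (((k : ℂ) + 1) * ((k : ℂ) + 2) / ((k : ℂ) + 3)) * w ^ k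
      - (((k : ℂ) + 1) * w ^ k) + w ^ k - 2 * (w ^ k / k) with ht
  have hts : Summable t := by
    apply Summable.of_norm_bounded hg (aux_bound hw)
  -- known sums
  have hB : HasSum (fun k : ℕ => w ^ k) ((1 - w)⁻¹) := hasSum_geometric_of_norm_lt_one hw
  have hA : HasSum (fun k : ℕ => ((k : ℂ) + 1) * w ^ k) (((1 - w) ^ 2)⁻¹) := by
    have := (hasSum_coe_mul_geometric_of_norm_lt_one hw).add hB
    convert this using 1
    · rfl
    · ext k; ring
    · field_simp
      ring
  have hL : HasSum (fun k : ℕ => w ^ k / k) (-Complex.log (1 - w)) :=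
    hasSum_taylorSeries_neg_log hw
  have hOrig : HasSum (fun k : ℕ => (((k : ℂ) + 1) * ((k : ℂ) + 2) / ((k : ℂ) + 3)) * w ^ k)
      ((∑' k, t k) + ((1 - w) ^ 2)⁻¹ - (1 - w)⁻¹ + 2 * (-Complex.log (1 - w))) := by
    have := ((hts.hasSum.add hA).sub hB).add (hL.mul_left 2)
    convert this using 1
    · rfl
    ext k
    simp only [ht]
    ring
  have harg : Complex.log (1 / (1 - w)) = -Complex.log (1 - w) := by
    rw [one_div, Complex.log_inv]
    intro h
    rw [Complex.arg_eq_pi_iff] at h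
    have hre : (1 - w).re = 1 - w.re := by simp
    have : |w.re| ≤ ‖w‖ := Complex.abs_re_le_norm w
    rw [hre] at h
    have := abs_le.mp (this.trans hw.le)
    linarith [h.1]
  rw [hOrig.tsum_eq, harg]
  have : (∑' k, t k) + ((1 - w) ^ 2)⁻¹ - (1 - w)⁻¹ + 2 * (-Complex.log (1 - w))
      - ((1 - w) ^ 2)⁻¹ + (1 - w)⁻¹ - 2 * -Complex.log (1 - w) = ∑' k, t k := by ring
  rw [this]
  calc ‖∑' k, t k‖ ≤ ∑' k, ‖t k‖ := norm_tsum_le_tsum_norm hts.norm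
  _ ≤ ∑' k : ℕ, 6 / ((k : ℝ) + 1) ^ 2 := Summable.tsum_le_tsum (aux_bound hw) hts.norm hg
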